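/- Fisher information limit for mildly integrated AR(1): let c > 0 and let (a_n) be a sequence of positive reals with a_n → 0 and n a_n → ∞ (so that c a_n < 1 for large n). Then (1/(4π)) ∫_{-π}^{π} 4 a_n (1 − c a_n − cos λ)² / ( 2(1 − c a_n)(1 − cos λ) + c² a_n² )² dλ → 1/(2c) as n → ∞. -/

import Mathlib

open MeasureTheory Real Filter Topology

noncomputable section

def Dfun (φ l : ℝ) : ℝ := 2 * φ * (1 - Real.cos l) + (1 - φ) ^ 2

def Gfun (φ l : ℝ) : ℝ := (1 / φ ^ 2) * (l + ((3 * φ ^ 2 - 1) * (2 / (1 - φ ^ 2))) *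
    Real.arctan (((1 + φ) / (1 - φ)) * Real.tan (l / 2)) + 2 * φ * Real.sin l / Dfun φ l)

lemma Dfun_pos {φ : ℝ} (h0 : 0 < φ) (h1 : φ < 1) (l : ℝ) : 0 < Dfun φ l := by
  have := Real.cos_le_one l
  unfold Dfun
  nlinarith

lemma harc {φ : ℝ} (h0 : 0 < φ) (h1 : φ < 1) {l : ℝ} (hl : l ∈ Set.Ioo (-π) π) :
    HasDerivAt (fun x => Real.arctan (((1 + φ) / (1 - φ)) * Real.tan (x / 2)))
      ((1 - φ ^ 2) / (2 * Dfun φ l)) l := by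
  obtain ⟨hl1, hl2⟩ := hl
  have hcos : 0 < Real.cos (l / 2) :=
    Real.cos_pos_of_mem_Ioo ⟨by linarith, by linarith⟩
  have h1' : HasDerivAt (fun x : ℝ => x / 2) (1 / 2) l := (hasDerivAt_id l).div_const 2
  have h2 : HasDerivAt Real.tan (1 / Real.cos (l / 2) ^ 2) (l / 2) :=
    Real.hasDerivAt_tan hcos.ne'
  have h3 : HasDerivAt (fun x : ℝ => Real.tan (x / 2))
      (1 / Real.cos (l / 2) ^ 2 * (1 / 2)) l := by have := h2.comp l h1'; exact this
  have h4 := h3.const_mul ((1 + φ) / (1 - φ))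
  have h5 := (Real.hasDerivAt_arctan (((1 + φ) / (1 - φ)) * Real.tan (l / 2))).comp l h4
  refine h5.congr_deriv ?_
  symm
  have ht2 : Real.tan (l / 2) ^ 2 = (1 - Real.cos (l / 2) ^ 2) / Real.cos (l / 2) ^ 2 := by
    rw [Real.tan_eq_sin_div_cos, div_pow, Real.sin_sq]
  have hcl : Real.cos l = 2 * Real.cos (l / 2) ^ 2 - 1 := by
    rw [show l = 2 * (l / 2) by ring, Real.cos_two_mul]
    ring_nf
  have hD : Dfun φ l = 2 * φ * (1 - (2 * Real.cos (l / 2) ^ 2 - 1)) + (1 - φ) ^ 2 := by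
    rw [Dfun, hcl]
  rw [mul_pow, ht2, hD]
  have h1φ : (1 : ℝ) - φ ≠ 0 := by linarith
  have hDpos := Dfun_pos h0 h1 l
  rw [hD] at hDpos
  set u := Real.cos (l / 2) with hu
  have hc : u ≠ 0 := hcos.ne'
  have hDne := hDpos.ne'
  have hPne : (φ * u ^ 2 * 2 + (-(φ * u ^ 4 * 8) - φ ^ 2 * u ^ 2 * 2) +
      (φ ^ 2 * u ^ 4 * 8 - φ ^ 3 * u ^ 2 * 2) + u ^ 2 * 2) ≠ 0 := by
    have h' : φ * u ^ 2 * 2 + (-(φ * u ^ 4 * 8) - φ ^ 2 * u ^ 2 * 2) +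
        (φ ^ 2 * u ^ 4 * 8 - φ ^ 3 * u ^ 2 * 2) + u ^ 2 * 2
        = 2 * u ^ 2 * ((1 - φ) * (2 * φ * (1 - (2 * u ^ 2 - 1)) + (1 - φ) ^ 2)) := by ring
    rw [h']
    have h2' : 0 < (1 - φ) * (2 * φ * (1 - (2 * u ^ 2 - 1)) + (1 - φ) ^ 2) :=
      mul_pos (by linarith) hDpos
    positivity
  field_simp
  congr 1 <;> ring


lemma hasDerivAt_G {φ : ℝ} (h0 : 0 < φ) (h1 : φ < 1) {l : ℝ} (hl : l ∈ Set.Ioo (-π) π) :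
    HasDerivAt (Gfun φ) (4 * (φ - Real.cos l) ^ 2 / Dfun φ l ^ 2) l := by
  have hDpos := Dfun_pos h0 h1 l
  have hD' : HasDerivAt (Dfun φ) (2 * φ * Real.sin l) l := by
    have h := (((Real.hasDerivAt_cos l).const_sub 1).const_mul (2 * φ)).add_const ((1 - φ) ^ 2)
    have h2 : HasDerivAt (fun x => 2 * φ * (1 - Real.cos x) + (1 - φ) ^ 2)
        (2 * φ * Real.sin l) l := by
      refine h.congr_deriv ?_
      ring
    exact h2
  have hnum : HasDerivAt (fun x => 2 * φ * Real.sin x) (2 * φ * Real.cos l) l :=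
    (Real.hasDerivAt_sin l).const_mul (2 * φ)
  have hquot := hnum.div hD' hDpos.ne'
  have harc' := (harc h0 h1 hl).const_mul ((3 * φ ^ 2 - 1) * (2 / (1 - φ ^ 2)))
  have hsum := (((hasDerivAt_id l).add harc').add hquot).const_mul ((1 : ℝ) / φ ^ 2)
  have hG : HasDerivAt (Gfun φ)
      (1 / φ ^ 2 * (1 + (3 * φ ^ 2 - 1) * (2 / (1 - φ ^ 2)) * ((1 - φ ^ 2) / (2 * Dfun φ l)) +
        (2 * φ * Real.cos l * Dfun φ l - 2 * φ * Real.sin l * (2 * φ * Real.sin l)) /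
          Dfun φ l ^ 2)) l := hsum
  refine hG.congr_deriv ?_
  symm
  have hφ2 : (1 : ℝ) - φ ^ 2 ≠ 0 := by nlinarith
  have hsin : Real.sin l ^ 2 = 1 - Real.cos l ^ 2 := Real.sin_sq l
  have hDval : Dfun φ l = 2 * φ * (1 - Real.cos l) + (1 - φ) ^ 2 := rfl
  rw [hDval] at hDpos ⊢
  set v := Real.cos l with hv
  field_simp
  rw [hsin]
  have hne : φ * 2 * (1 - v) + (1 - φ) ^ 2 ≠ 0 := by linarith
  field_simp
  ring

lemma G_odd (φ x : ℝ) : Gfun φ (-x) = - Gfun φ x := by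
  unfold Gfun Dfun
  rw [show (-x) / 2 = -(x / 2) by ring]
  simp [Real.sin_neg, Real.cos_neg, Real.tan_neg, Real.arctan_neg]
  ring

lemma key_integral {φ : ℝ} (h0 : 0 < φ) (h1 : φ < 1) :
    ∫ l in Set.Ioo (-π) π, 4 * (φ - Real.cos l) ^ 2 / Dfun φ l ^ 2 = 4 * π / (1 - φ ^ 2) := by
  have hφ2 : (1 : ℝ) - φ ^ 2 ≠ 0 := by nlinarith
  have hcont : Continuous fun l => 4 * (φ - Real.cos l) ^ 2 / Dfun φ l ^ 2 := by
    apply Continuous.div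
    · exact continuous_const.mul ((continuous_const.sub Real.continuous_cos).pow 2)
    · exact ((continuous_const.mul (continuous_const.sub Real.continuous_cos)).add
        continuous_const).pow 2
    · exact fun l => pow_ne_zero 2 (Dfun_pos h0 h1 l).ne'
  set g : ℝ → ℝ := fun l => 4 * (φ - Real.cos l) ^ 2 / Dfun φ l ^ 2 with hg
  set F : ℝ → ℝ := fun x => ∫ t in (-x)..x, g t with hF
  have hFcont : Continuous F := by
    have hH := intervalIntegral.continuous_primitive (μ := volume)
      (fun a b => (hcont.intervalIntegrable a b)) 0
    have : F = fun x => (∫ t in (0:ℝ)..x, g t) - ∫ t in (0:ℝ)..(-x), g t := by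
      funext x
      show (∫ t in (-x)..x, g t) = _
      rw [← intervalIntegral.integral_add_adjacent_intervals
        (hcont.intervalIntegrable (-x) 0) (hcont.intervalIntegrable 0 x),
        intervalIntegral.integral_symm]
      ring
    rw [this]
    exact hH.sub (hH.comp continuous_neg)
  have hFTC : ∀ x ∈ Set.Ioo (0:ℝ) π, F x = 2 * Gfun φ x := by
    intro x hx
    have hxIcc : Set.uIcc (-x) x ⊆ Set.Ioo (-π) π := by
      rw [Set.uIcc_of_le (by linarith [hx.1] : -x ≤ x)]
      intro t ht
      exact ⟨by linarith [ht.1, hx.2], by linarith [ht.2, hx.2]⟩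
    have := intervalIntegral.integral_eq_sub_of_hasDerivAt
      (f := Gfun φ) (f' := g)
      (fun t ht => hasDerivAt_G h0 h1 (hxIcc ht))
      (hcont.intervalIntegrable (-x) x)
    have h2 : F x = Gfun φ x - Gfun φ (-x) := this
    rw [h2, G_odd]
    ring
  have hlimG : Tendsto (fun x => 2 * Gfun φ x) (𝓝[<] π) (𝓝 (4 * π / (1 - φ ^ 2))) := by
    have hk : 0 < (1 + φ) / (1 - φ) := by
      apply div_pos <;> linarith
    have t1 : Tendsto (fun x : ℝ => x / 2) (𝓝[<] π) (𝓝[<] (π / 2)) := by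
      apply tendsto_nhdsWithin_of_tendsto_nhds_of_eventually_within
      · exact ((continuous_id.div_const 2).tendsto π).mono_left nhdsWithin_le_nhds
      · filter_upwards [self_mem_nhdsWithin] with x hx
        simp only [Set.mem_Iio] at hx ⊢
        linarith
    have t2 := Real.tendsto_tan_pi_div_two.comp t1
    have t3 := t2.const_mul_atTop hk
    have t4 : Tendsto (fun x => Real.arctan (((1 + φ) / (1 - φ)) * Real.tan (x / 2)))
        (𝓝[<] π) (𝓝 (π / 2)) :=
      (Real.tendsto_arctan_atTop.mono_right nhdsWithin_le_nhds).comp t3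
    have t5 : Tendsto (fun x => 2 * φ * Real.sin x / Dfun φ x) (𝓝[<] π) (𝓝 0) := by
      have hc : Continuous fun x => 2 * φ * Real.sin x / Dfun φ x := by
        apply Continuous.div
        · exact continuous_const.mul Real.continuous_sin
        · exact (continuous_const.mul (continuous_const.sub Real.continuous_cos)).add
            continuous_const
        · exact fun l => (Dfun_pos h0 h1 l).ne'
      have := (hc.tendsto π).mono_left (nhdsWithin_le_nhds (s := Set.Iio π))
      simpa [Real.sin_pi] using this
    have tid : Tendsto (fun x : ℝ => x) (𝓝[<] π) (𝓝 π) :=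
      (continuous_id.tendsto π).mono_left nhdsWithin_le_nhds
    have tsum := (((tid.add (t4.const_mul ((3 * φ ^ 2 - 1) * (2 / (1 - φ ^ 2))))).add
      t5).const_mul ((1:ℝ) / φ ^ 2)).const_mul (2:ℝ)
    have : Tendsto (fun x => 2 * Gfun φ x) (𝓝[<] π)
        (𝓝 (2 * (1 / φ ^ 2 * (π + (3 * φ ^ 2 - 1) * (2 / (1 - φ ^ 2)) * (π / 2) + 0)))) := by
      exact tsum
    convert this using 2
    field_simp
    ring
  have hmem : Set.Ioo (0:ℝ) π ∈ 𝓝[<] π :=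
    Ioo_mem_nhdsLT_of_mem ⟨Real.pi_pos, le_refl π⟩
  have hFlim : Tendsto F (𝓝[<] π) (𝓝 (4 * π / (1 - φ ^ 2))) := by
    apply hlimG.congr'
    filter_upwards [hmem] with x hx
    exact (hFTC x hx).symm
  have hFlim2 : Tendsto F (𝓝[<] π) (𝓝 (F π)) :=
    (hFcont.tendsto π).mono_left nhdsWithin_le_nhds
  have hFval : F π = 4 * π / (1 - φ ^ 2) := tendsto_nhds_unique hFlim2 hFlim
  rw [← MeasureTheory.integral_Ioc_eq_integral_Ioo]
  rw [← intervalIntegral.integral_of_le (by linarith [Real.pi_pos] : -π ≤ π)]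
  exact hFval

/-- **Fisher information limit for the mildly integrated AR(1) model.** If `c > 0`,
`a_n > 0`, `a_n → 0` and `n a_n → ∞`, then
`(1/(4π)) ∫_{-π}^{π} 4 a_n (1-ca_n-cos λ)² / (2(1-ca_n)(1-cos λ)+c²a_n²)² dλ → 1/(2c)`. -/
theorem ar1_fisher_information_limit (c : ℝ) (hc : 0 < c) (a : ℕ → ℝ)
    (ha_pos : ∀ n, 0 < a n) (ha0 : Tendsto a atTop (𝓝 0))
    (hna : Tendsto (fun n : ℕ => (n : ℝ) * a n) atTop atTop) :
    Tendsto (fun n : ℕ =>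
        (1 / (4 * π)) * ∫ l in Set.Ioo (-π) π,
          4 * a n * (1 - c * a n - Real.cos l) ^ 2 /
            (2 * (1 - c * a n) * (1 - Real.cos l) + c ^ 2 * (a n) ^ 2) ^ 2)
      atTop (𝓝 (1 / (2 * c))) := by
  have hca : Tendsto (fun n => c * a n) atTop (𝓝 0) := by
    have := ha0.const_mul c
    rwa [mul_zero] at this
  have hev : ∀ᶠ n in atTop, c * a n < 1 := hca.eventually_lt_const one_pos
  have heq : ∀ᶠ n in atTop,
      (1 / (4 * π)) * (∫ l in Set.Ioo (-π) π,
          4 * a n * (1 - c * a n - Real.cos l) ^ 2 /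
            (2 * (1 - c * a n) * (1 - Real.cos l) + c ^ 2 * (a n) ^ 2) ^ 2)
        = 1 / (c * (2 - c * a n)) := by
    filter_upwards [hev] with n hn
    have hca_pos : 0 < c * a n := mul_pos hc (ha_pos n)
    have h0 : 0 < 1 - c * a n := by linarith
    have h1 : 1 - c * a n < 1 := by linarith
    have hfun : (fun l => 4 * a n * (1 - c * a n - Real.cos l) ^ 2 /
            (2 * (1 - c * a n) * (1 - Real.cos l) + c ^ 2 * (a n) ^ 2) ^ 2)
        = fun l => a n * (4 * ((1 - c * a n) - Real.cos l) ^ 2 / Dfun (1 - c * a n) l ^ 2) := by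
      funext l
      have hd : 2 * (1 - c * a n) * (1 - Real.cos l) + c ^ 2 * (a n) ^ 2
          = Dfun (1 - c * a n) l := by unfold Dfun; ring
      rw [hd, ← mul_div_assoc]
      congr 1
      ring
    rw [show (∫ l in Set.Ioo (-π) π,
          4 * a n * (1 - c * a n - Real.cos l) ^ 2 /
            (2 * (1 - c * a n) * (1 - Real.cos l) + c ^ 2 * (a n) ^ 2) ^ 2)
        = ∫ l in Set.Ioo (-π) π,
            a n * (4 * ((1 - c * a n) - Real.cos l) ^ 2 / Dfun (1 - c * a n) l ^ 2) from by
      rw [hfun]]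
    rw [MeasureTheory.integral_const_mul, key_integral h0 h1]
    have hπ := Real.pi_ne_zero
    have h2 : (0:ℝ) < 2 - c * a n := by linarith
    have hφ : 1 - (1 - c * a n) ^ 2 = c * a n * (2 - c * a n) := by ring
    rw [hφ]
    have han := (ha_pos n).ne'
    field_simp
  have hden : Tendsto (fun n => c * (2 - c * a n)) atTop (𝓝 (c * (2 - 0))) :=
    (tendsto_const_nhds.sub hca).const_mul c
  have htarget : Tendsto (fun n => 1 / (c * (2 - c * a n))) atTop (𝓝 (1 / (c * (2 - 0)))) :=
    tendsto_const_nhds.div hden (by positivity)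
  have : (1 : ℝ) / (c * (2 - 0)) = 1 / (2 * c) := by ring
  rw [this] at htarget
  exact htarget.congr' (heq.mono fun n h => h.symm)

end
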